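/- Let E be a real inner product space, let K be a nonempty compact topological space, and let L : E × K → ℝ be such that θ ↦ L(θ, δ) is convex and differentiable for every δ ∈ K, the gradient map (θ, δ) ↦ ∇_θ L(θ, δ) is continuous on E × K, and L is continuous. Fix θ₀ ∈ E and suppose the set of maximizers argmax_{δ ∈ K} L(θ₀, δ) is a singleton {δ*}. Then the max-function φ(θ) = max_{δ ∈ K} L(θ, δ) is differentiable at θ₀ and ∇φ(θ₀) = ∇_θ L(θ₀, δ*). -/

import Mathlib

open Filter Set Topology

/-- Gradient inequality for convex functions: `f'(y - x) ≤ f y - f x`. -/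
lemma convexOn_grad_ineq {E : Type*} [NormedAddCommGroup E] [NormedSpace ℝ E]
    {f : E → ℝ} {f' : E →L[ℝ] ℝ} {x : E}
    (hf : ConvexOn ℝ Set.univ f) (hd : HasFDerivAt f f' x) (y : E) :
    f' (y - x) ≤ f y - f x := by
  set v := y - x with hv
  have hline : ∀ t : ℝ, x + t • v = (1 - t) • x + t • y := by
    intro t; rw [hv, smul_sub, sub_smul, one_smul]; abel
  have hgd : HasDerivAt (fun t : ℝ => f (x + t • v)) (f' v) 0 := by
    have h1 : HasDerivAt (fun t : ℝ => x + t • v) v 0 := by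
      simpa using ((hasDerivAt_id (0:ℝ)).smul_const v).const_add x
    have h2 : HasFDerivAt f f' (x + (0:ℝ) • v) := by simpa using hd
    exact h2.comp_hasDerivAt 0 h1
  rw [hasDerivAt_iff_tendsto_slope] at hgd
  have hgd' : Tendsto (slope (fun t : ℝ => f (x + t • v)) 0) (𝓝[>] 0) (𝓝 (f' v)) :=
    hgd.mono_left (nhdsWithin_mono _ (fun t ht => ne_of_gt ht))
  refine le_of_tendsto hgd' ?_
  filter_upwards [Ioc_mem_nhdsGT_of_mem (Set.left_mem_Ico.2 zero_lt_one)] with t ht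
  have ht0 : 0 < t := ht.1
  have hcvx : f (x + t • v) ≤ (1 - t) * f x + t * f y := by
    rw [hline]
    exact hf.2 (mem_univ x) (mem_univ y) (by linarith [ht.2]) ht0.le (by ring)
  have h0 : x + (0:ℝ) • v = x := by simp
  rw [slope_def_field, h0, sub_zero, div_le_iff₀ ht0]
  nlinarith

/-- Danskin's theorem, singleton case: if the maximizer of `δ ↦ L θ₀ δ` is unique, then
the max-function `θ ↦ max_δ L θ δ` is differentiable at `θ₀` with gradient
`∇_θ L(θ₀, δ*)` (Theorem 2, final claim). -/
theorem danskin_singleton_gradient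
    {E K : Type*} [NormedAddCommGroup E] [InnerProductSpace ℝ E]
    [TopologicalSpace K] [CompactSpace K] [Nonempty K]
    (L : E → K → ℝ) (gradL : E → K → E)
    (hconv : ∀ δ : K, ConvexOn ℝ Set.univ fun θ : E => L θ δ)
    (hdiff : ∀ (θ : E) (δ : K), HasFDerivAt (fun θ' : E => L θ' δ) (innerSL ℝ (gradL θ δ)) θ)
    (hgradcont : Continuous fun p : E × K => gradL p.1 p.2)
    (hLcont : Continuous fun p : E × K => L p.1 p.2)
    (θ₀ : E) (δstar : K)
    (hmax : ∀ δ : K, L θ₀ δ ≤ L θ₀ δstar)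
    (huniq : ∀ δ : K, (∀ δ' : K, L θ₀ δ' ≤ L θ₀ δ) → δ = δstar) :
    HasFDerivAt (fun θ : E => ⨆ δ : K, L θ δ) (innerSL ℝ (gradL θ₀ δstar)) θ₀ := by
  classical
  set g := gradL θ₀ δstar with hg
  -- a maximizer selection
  have hsel : ∀ θ : E, ∃ δ : K, ∀ δ' : K, L θ δ' ≤ L θ δ := by
    intro θ
    obtain ⟨δ, -, hδ⟩ := isCompact_univ.exists_isMaxOn univ_nonempty
      ((hLcont.comp (Continuous.prodMk_right θ)).continuousOn)
    exact ⟨δ, fun δ' => hδ (mem_univ δ')⟩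
  choose sel hselspec using hsel
  have hbdd : ∀ θ : E, BddAbove (Set.range fun δ : K => L θ δ) := fun θ =>
    ⟨L θ (sel θ), by rintro _ ⟨δ, rfl⟩; exact hselspec θ δ⟩
  have hphi : ∀ θ : E, (⨆ δ : K, L θ δ) = L θ (sel θ) := fun θ =>
    le_antisymm (ciSup_le (hselspec θ)) (le_ciSup (hbdd θ) (sel θ))
  have hphi0 : (⨆ δ : K, L θ₀ δ) = L θ₀ δstar :=
    le_antisymm (ciSup_le hmax) (le_ciSup (hbdd θ₀) δstar)
  rw [hasFDerivAt_iff_isLittleO_nhds_zero, Asymptotics.isLittleO_iff]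
  intro c hc
  -- continuity of the gradient at (θ₀, δstar)
  have hcont_pt : {p : E × K | ‖gradL p.1 p.2 - g‖ < c} ∈ 𝓝 (θ₀, δstar) := by
    have hco : Continuous fun p : E × K => ‖gradL p.1 p.2 - g‖ :=
      (hgradcont.sub continuous_const).norm
    exact (isOpen_lt hco continuous_const).mem_nhds (by simp [hg, hc])
  obtain ⟨U, hU, V, hV, hUV⟩ := mem_nhds_prod_iff.1 hcont_pt
  set V' := interior V with hV'def
  have hV'open : IsOpen V' := isOpen_interior
  have hδV' : δstar ∈ V' := mem_interior_iff_mem_nhds.2 hV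
  -- maximizers for θ near θ₀ land in V'
  have hloc : ∃ N ∈ 𝓝 θ₀, ∀ θ ∈ N, sel θ ∈ V' := by
    by_cases hC : (V'ᶜ : Set K).Nonempty
    · obtain ⟨δ₁, hδ₁C, hδ₁max⟩ :=
        (hV'open.isClosed_compl.isCompact).exists_isMaxOn hC
          ((hLcont.comp (Continuous.prodMk_right θ₀)).continuousOn)
      have hδ₁ne : δ₁ ≠ δstar := fun h => hδ₁C (h ▸ hδV')
      have hlt : L θ₀ δ₁ < L θ₀ δstar := by
        rcases lt_or_eq_of_le (hmax δ₁) with h | h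
        · exact h
        · exact absurd (huniq δ₁ (fun δ' => h ▸ hmax δ')) hδ₁ne
      set m := L θ₀ δ₁ with hm
      set M := L θ₀ δstar with hM
      have hO : IsOpen {p : E × K | L p.1 p.2 < m + (M - m)/3} :=
        isOpen_lt hLcont continuous_const
      have hsub : ({θ₀} ×ˢ (V'ᶜ : Set K)) ⊆ {p : E × K | L p.1 p.2 < m + (M - m)/3} := by
        rintro ⟨θ, δ⟩ ⟨hθ, hδ⟩
        have hθ' : θ = θ₀ := hθ
        have h1 : L θ₀ δ ≤ m := hδ₁max hδ
        simp only [mem_setOf_eq, hθ']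
        linarith
      obtain ⟨u, v, hu, -, hθ₀u, hCv, huv⟩ :=
        generalized_tube_lemma isCompact_singleton
          (hV'open.isClosed_compl.isCompact) hO hsub
      have hcθ : Continuous fun θ : E => L θ δstar :=
        hLcont.comp (continuous_id.prodMk continuous_const)
      have hN₂ : {θ : E | M - (M - m)/3 < L θ δstar} ∈ 𝓝 θ₀ :=
        (isOpen_lt continuous_const hcθ).mem_nhds (by simp only [mem_setOf_eq, ← hM]; linarith)
      refine ⟨u ∩ {θ : E | M - (M - m)/3 < L θ δstar},
        Filter.inter_mem (hu.mem_nhds (hθ₀u rfl)) hN₂, ?_⟩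
      rintro θ ⟨hθu, hθ2⟩
      by_contra hselV
      have hin : (θ, sel θ) ∈ u ×ˢ v := ⟨hθu, hCv hselV⟩
      have h1 : L θ (sel θ) < m + (M - m)/3 := huv hin
      have h2 : L θ δstar ≤ L θ (sel θ) := hselspec θ δstar
      simp only [mem_setOf_eq] at hθ2
      linarith
    · exact ⟨Set.univ, Filter.univ_mem, fun θ _ => by
        by_contra h; exact hC ⟨sel θ, h⟩⟩
  obtain ⟨N, hN, hNspec⟩ := hloc
  have htend : Tendsto (fun h : E => θ₀ + h) (𝓝 0) (𝓝 θ₀) := by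
    exact (continuous_const.add continuous_id).tendsto' (0 : E) θ₀ (by simp)
  have hB : ∀ᶠ h : E in 𝓝 0, ‖gradL (θ₀ + h) (sel (θ₀ + h)) - g‖ ≤ c := by
    filter_upwards [htend (Filter.inter_mem hU hN)] with h hh
    have hsV : sel (θ₀ + h) ∈ V := interior_subset (hNspec _ hh.2)
    have hmem : ((θ₀ + h, sel (θ₀ + h)) : E × K) ∈ U ×ˢ V := ⟨hh.1, hsV⟩
    exact le_of_lt (hUV hmem)
  have hA : ∀ᶠ h : E in 𝓝 0,
      ‖L (θ₀ + h) δstar - L θ₀ δstar - (innerSL ℝ g) h‖ ≤ c * ‖h‖ := by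
    have hd := hdiff θ₀ δstar
    rw [hasFDerivAt_iff_isLittleO_nhds_zero] at hd
    simpa using (Asymptotics.isLittleO_iff.1 hd) hc
  filter_upwards [hA, hB] with h hA hB
  set δh := sel (θ₀ + h) with hδh
  have hup : L (θ₀ + h) δh - L θ₀ δstar - (innerSL ℝ g) h ≤ c * ‖h‖ := by
    have h1 : (innerSL ℝ (gradL (θ₀ + h) δh)) (θ₀ - (θ₀ + h))
        ≤ L θ₀ δh - L (θ₀ + h) δh :=
      convexOn_grad_ineq (hconv δh) (hdiff (θ₀ + h) δh) θ₀
    have hsub : θ₀ - (θ₀ + h) = -h := by abel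
    rw [hsub] at h1
    have h1' : L (θ₀ + h) δh - L θ₀ δh ≤ inner ℝ (gradL (θ₀ + h) δh) h := by
      simp only [innerSL_apply_apply, inner_neg_right] at h1
      linarith
    have h2 : L θ₀ δh ≤ L θ₀ δstar := hmax δh
    have h3 : (inner ℝ (gradL (θ₀ + h) δh) h : ℝ) - inner ℝ g h
        = inner ℝ (gradL (θ₀ + h) δh - g) h := (inner_sub_left _ _ _).symm
    have h4 : (inner ℝ (gradL (θ₀ + h) δh - g) h : ℝ) ≤ c * ‖h‖ :=
      le_trans (real_inner_le_norm _ _)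
        (mul_le_mul_of_nonneg_right hB (norm_nonneg h))
    simp only [innerSL_apply_apply]
    linarith
  have hAl := abs_le.1 (by rwa [Real.norm_eq_abs] at hA)
  have hlow : -(c * ‖h‖) ≤ L (θ₀ + h) δh - L θ₀ δstar - (innerSL ℝ g) h := by
    have h1 : L (θ₀ + h) δstar ≤ L (θ₀ + h) δh := hselspec (θ₀ + h) δstar
    linarith [hAl.1]
  simp only [hphi (θ₀ + h), hphi0, ← hδh, ← hg]
  rw [Real.norm_eq_abs, abs_le]
  constructor <;> [exact hlow; exact hup]
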